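/- Define T(n,k) for n ≥ 0, k ∈ ℤ by T(0,0) = 1, T(0,k) = 0 for k ≠ 0, T(n,k) = 0 for k < 0, and T(n,k) = (k+1)T(n-1,k) + (n+1)T(n-1,k-1) + (n-k+1)T(n-1,k-2) for n ≥ 1. Then ∑_k T(n,k) = 4^n · n! / 2^n = 2^n · n!. -/

import Mathlib

/-- with `T 0 0 = 1`, `T 0 k = 0` for `k ≠ 0`, `T n k = 0` for `k < 0`,
and `T n k = (k+1) T (n-1) k + (n+1) T (n-1) (k-1) + (n-k+1) T (n-1) (k-2)` for `n ≥ 1`,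
the row sums satisfy `∑ k, T n k = ∏_{j=0}^{n-1} (3 + 2j)`. -/
theorem stmt3 (T : ℕ → ℤ → ℤ)
    (h00 : T 0 0 = 1)
    (h0 : ∀ k : ℤ, k ≠ 0 → T 0 k = 0)
    (hneg : ∀ (n : ℕ) (k : ℤ), k < 0 → T n k = 0)
    (hrec : ∀ n : ℕ, 1 ≤ n → ∀ k : ℤ, 0 ≤ k →
      T n k = (k + 1) * T (n - 1) k + ((n : ℤ) + 1) * T (n - 1) (k - 1)
              + ((n : ℤ) - k + 1) * T (n - 1) (k - 2))
    (n : ℕ) :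
    ∑ k ∈ Finset.range (n + 1), T n (k : ℤ) =
      ∏ j ∈ Finset.range n, (3 + 2 * (j : ℤ)) := by
  -- vanishing above the diagonal
  have hvan : ∀ m : ℕ, ∀ k : ℤ, (m : ℤ) < k → T m k = 0 := by
    intro m
    induction m with
    | zero => intro k hk; exact h0 k (by omega)
    | succ m ih =>
      intro k hk
      push_cast at hk
      have hk0 : (0:ℤ) ≤ k := by omega
      rw [hrec (m+1) (by omega) k hk0]
      simp only [Nat.add_sub_cancel]
      push_cast
      rw [ih k (by omega), ih (k-1) (by omega)]
      by_cases he : k = (m:ℤ) + 2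
      · subst he; ring
      · rw [ih (k-2) (by omega)]; ring
  induction n with
  | zero => simpa using h00
  | succ n ih =>
    rw [Finset.prod_range_succ, ← ih]
    have hr : ∀ k ∈ Finset.range (n+2), T (n+1) (k:ℤ) =
        ((k:ℤ)+1) * T n k + ((n:ℤ)+2) * T n ((k:ℤ)-1)
          + ((n:ℤ)+2-k) * T n ((k:ℤ)-2) := by
      intro k _
      rw [hrec (n+1) (by omega) k (by positivity)]
      simp only [Nat.add_sub_cancel]
      push_cast
      ring
    rw [Finset.sum_congr rfl hr, Finset.sum_add_distrib, Finset.sum_add_distrib]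
    have hA : ∑ k ∈ Finset.range (n+2), ((k:ℤ)+1) * T n k
        = ∑ k ∈ Finset.range (n+1), ((k:ℤ)+1) * T n k := by
      rw [Finset.sum_range_succ]
      have h1 : T n ((n:ℤ)+1) = 0 := hvan n _ (by omega)
      push_cast
      rw [h1, mul_zero, add_zero]
    have hB : ∑ k ∈ Finset.range (n+2), ((n:ℤ)+2) * T n ((k:ℤ)-1)
        = ((n:ℤ)+2) * ∑ k ∈ Finset.range (n+1), T n k := by
      rw [Finset.sum_range_succ']
      have h1 : T n ((0:ℤ) - 1) = 0 := hneg n _ (by omega)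
      simp only [Nat.cast_zero, h1, mul_zero, add_zero]
      rw [Finset.mul_sum]
      apply Finset.sum_congr rfl
      intro k _
      push_cast
      ring_nf
    have hC : ∑ k ∈ Finset.range (n+2), ((n:ℤ)+2-k) * T n ((k:ℤ)-2)
        = ∑ k ∈ Finset.range (n+1), ((n:ℤ)-k) * T n k := by
      rw [Finset.sum_range_succ', Finset.sum_range_succ']
      have h1 : T n (-1) = 0 := hneg n _ (by omega)
      have h2 : T n (-2) = 0 := hneg n _ (by omega)
      push_cast
      norm_num
      rw [h1, h2, mul_zero, mul_zero, add_zero, add_zero]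
      rw [Finset.sum_range_succ]
      have hz : ((n:ℤ) - n) * T n (n:ℤ) = 0 := by ring
      rw [hz, add_zero]
      apply Finset.sum_congr rfl
      intro k _
      have he : (k:ℤ)+1+1-2 = k := by ring
      rw [he]
      ring
    rw [hA, hB, hC]
    have hAC : ∑ k ∈ Finset.range (n+1), ((k:ℤ)+1) * T n k
        + ∑ k ∈ Finset.range (n+1), ((n:ℤ)-k) * T n k
        = ((n:ℤ)+1) * ∑ k ∈ Finset.range (n+1), T n k := by
      rw [← Finset.sum_add_distrib, Finset.mul_sum]
      apply Finset.sum_congr rfl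
      intro k _
      ring
    linarith
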